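/- Let [1] be the category with objects 0, 1 and unique non-identity morphism γ : 0 → 1, and let G : [1]^op × [1] ⥤ Ab be the bimodule with G(0, 1) = ℤ and all other values 0 (and all values on non-identity morphisms the zero homomorphism). Then H^0_HM([1], G) = 0, H^1_HM([1], G) ≅ ℤ, and H^n_HM([1], G) = 0 for all n ≥ 2. Consequently, for the functor f : [0] → [1] with f(0) = 0 (which admits a right adjoint), the canonical homomorphism H^1_HM([1], G) → H^1_HM([0], G ∘ (f^op × f)) is not an isomorphism. -/

import Mathlib

/- Auxiliary general constructions -/

open CategoryTheory Limits Opposite Simplicial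

universe w v u

namespace CatCohomology

section Bar

variable {A : Type u} [Category.{v} A]

/-- The group of `Δ`-cochains of a category `A` with coefficients in a bimodule
`G : Aᵒᵖ × A ⥤ Ab`: the product over all `Δ`-simplices `τ` of the nerve of `A` of
the groups `G (τ 0, τ (last))`. -/
noncomputable def barObj (G : Aᵒᵖ × A ⥤ AddCommGrpCat.{w}) (Δ : SimplexCategory) :
    AddCommGrpCat.{max u v w} :=
  AddCommGrpCat.of (∀ τ : (nerve A).obj (op Δ), G.obj (op (τ.obj 0), τ.obj (Fin.last Δ.len)))

/-- The cosimplicial abelian group of cochains on the nerve of `A` with coefficients in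
a bimodule `G : Aᵒᵖ × A ⥤ Ab`.  Its alternating coface map complex is the standard
cochain complex computing the (Hochschild-Mitchell style) cohomology of the small
category `A` with coefficients in `G`. -/
noncomputable def barCosimplicial (G : Aᵒᵖ × A ⥤ AddCommGrpCat.{w}) :
    CosimplicialObject AddCommGrpCat.{max u v w} where
  obj Δ := barObj G Δ
  map {Δ₁ Δ₂} g := AddCommGrpCat.ofHom (AddMonoidHom.mk'
    (fun φ τ => G.map ((τ.map (homOfLE (Fin.zero_le _))).op,
        τ.map (homOfLE (Fin.le_last _))) (φ ((nerve A).map g.op τ)))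
    (by intro φ ψ; funext τ; exact map_add _ _ _))
  map_id Δ := by
    ext φ τ
    show G.map ((τ.map (𝟙 (0 : Fin (Δ.len + 1)))).op, τ.map (𝟙 (Fin.last Δ.len))) (φ τ) = φ τ
    rw [τ.map_id, τ.map_id]
    show G.map (𝟙 (op (τ.obj 0), τ.obj (Fin.last Δ.len))) (φ τ) = φ τ
    rw [G.map_id]; rfl
  map_comp {Δ₁ Δ₂ Δ₃} g h := by
    ext φ τ
    show G.map _ (φ _) = G.map _ (G.map _ (φ ((nerve A).map g.op ((nerve A).map h.op τ))))
    rw [← CategoryTheory.comp_apply, ← G.map_comp]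
    apply congrFun; apply congrArg; apply congrArg; apply congrArg
    refine Prod.ext ?_ ?_
    · show (τ.map (homOfLE _)).op =
        ((((nerve A).map h.op τ).map (homOfLE _)).op ≫ (τ.map (homOfLE _)).op)
      erw [← op_comp]; apply congrArg
      show τ.map _ = τ.map _ ≫ τ.map _
      erw [← τ.map_comp]; congr 1
    · show τ.map (homOfLE _) = (((nerve A).map h.op τ).map (homOfLE _) ≫ τ.map (homOfLE _))
      show τ.map _ = τ.map _ ≫ τ.map _
      erw [← τ.map_comp]; congr 1

/-- The standard cochain complex of a small category with coefficients in a bimodule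
`G : Aᵒᵖ × A ⥤ Ab` (with the alternating sum differentials). -/
noncomputable def cochainComplex (G : Aᵒᵖ × A ⥤ AddCommGrpCat.{w}) :
    CochainComplex AddCommGrpCat.{max u v w} ℕ :=
  (AlgebraicTopology.alternatingCofaceMapComplex _).obj (barCosimplicial G)

/-- The cohomology of a small category with coefficients in a bimodule,
i.e. the Hochschild-Mitchell cohomology `H*(A, G) = Ext*(ℤA, G)` computed by the
standard cochain complex. -/
noncomputable def cohomology (G : Aᵒᵖ × A ⥤ AddCommGrpCat.{w}) (n : ℕ) :
    AddCommGrpCat.{max u v w} :=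
  (cochainComplex G).homology n

end Bar

section BarMaps

variable {A : Type u} [Category.{v} A] {B : Type u} [Category.{v} B]

/-- Restriction of cochains along a functor `f : A ⥤ B`:
the canonical map of cosimplicial abelian groups. -/
noncomputable def barRestriction (f : A ⥤ B) (G : Bᵒᵖ × B ⥤ AddCommGrpCat.{w}) :
    barCosimplicial (A := B) G ⟶ barCosimplicial (f.op.prod f ⋙ G) where
  app Δ := AddCommGrpCat.ofHom (AddMonoidHom.mk' (fun φ τ => φ (τ ⋙ f)) (by intro φ ψ; funext τ; rfl))
  naturality {Δ₁ Δ₂} g := by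
    ext φ τ
    rfl

/-- The canonical homomorphism `H^n(B, G) ⟶ H^n(A, G ∘ (fᵒᵖ × f))` on the cohomology
of small categories with coefficients in bimodules, induced by the inverse image along
`f : A ⥤ B` (restriction of cochains). -/
noncomputable def cohomologyMap (f : A ⥤ B) (G : Bᵒᵖ × B ⥤ AddCommGrpCat.{w}) (n : ℕ) :
    cohomology (A := B) G n ⟶ cohomology (f.op.prod f ⋙ G) n :=
  HomologicalComplex.homologyMap
    ((AlgebraicTopology.alternatingCofaceMapComplex _).map (barRestriction f G)) n

/-- The cohomology `H^n(A, G) = Ext^n(Δℤ, G) = lim^n G` of a small category `A` with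
coefficients in a diagram of abelian groups `G : A ⥤ Ab`, computed by the standard
cochain complex `C^n(A, G) = ∏_{a₀ → ⋯ → aₙ} G(aₙ)`. -/
noncomputable def diagCohomology (G : A ⥤ AddCommGrpCat.{w}) (n : ℕ) :
    AddCommGrpCat.{max u v w} :=
  cohomology (CategoryTheory.Prod.snd Aᵒᵖ A ⋙ G) n

/-- The canonical homomorphism `H^n(B, G) ⟶ H^n(A, G ∘ f)` for a functor `f : A ⥤ B`
and a diagram `G : B ⥤ Ab`, induced by the (exact) inverse image functor
`f^* : Ab^B ⥤ Ab^A` (restriction of cochains along `f`). -/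
noncomputable def diagCohomologyMap (f : A ⥤ B) (G : B ⥤ AddCommGrpCat.{w}) (n : ℕ) :
    diagCohomology G n ⟶ diagCohomology (f ⋙ G) n :=
  cohomologyMap f (CategoryTheory.Prod.snd Bᵒᵖ B ⋙ G) n

end BarMaps

/-- The bimodule `G` on `[1] = Fin 2` with `G (0,1) = ℤ` and all other values `0`. -/
noncomputable def Gbim : (Fin 2)ᵒᵖ × Fin 2 ⥤ AddCommGrpCat.{0} where
  obj x := if x.1.unop < x.2 then AddCommGrpCat.of ℤ else AddCommGrpCat.of PUnit
  map {x y} p :=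
    if hx : x.1.unop < x.2 then
      eqToHom ((if_pos hx).trans (if_pos
        (lt_of_le_of_lt (leOfHom p.1.unop) (lt_of_lt_of_le hx (leOfHom p.2)))).symm)
    else 0
  map_id x := by
    by_cases hx : x.1.unop < x.2
    · simp [dif_pos hx]
    · rw [dif_neg hx]
      have hz : IsZero (ite (x.1.unop < x.2) (AddCommGrpCat.of ℤ) (AddCommGrpCat.of PUnit)) := by
        rw [if_neg hx]
        exact AddCommGrpCat.isZero_of_subsingleton _
      exact (hz.eq_of_src _ _)
  map_comp {x y z} p q := by
    by_cases hx : x.1.unop < x.2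
    · have hy : y.1.unop < y.2 :=
        lt_of_le_of_lt (leOfHom p.1.unop) (lt_of_lt_of_le hx (leOfHom p.2))
      simp [dif_pos hx, dif_pos hy, eqToHom_trans]
    · simp [dif_neg hx]

/-- The functor `[0] ⥤ [1]` (i.e. `Fin 1 ⥤ Fin 2`) sending `0` to `0`. -/
def f01 : Fin 1 ⥤ Fin 2 := (monotone_const (c := (0 : Fin 2))).functor

end CatCohomology

open CatCohomology

namespace CatCohomology
namespace Aux15

lemma lt2 {a b : Fin 2} (h : a < b) : a = 0 ∧ b = 1 := by omega

noncomputable def toZ {x : (Fin 2)ᵒᵖ × Fin 2} (h : x.1.unop < x.2) :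
    Gbim.obj x ⟶ AddCommGrpCat.of ℤ := eqToHom (if_pos h)

noncomputable def ofZ {x : (Fin 2)ᵒᵖ × Fin 2} (h : x.1.unop < x.2) :
    AddCommGrpCat.of ℤ ⟶ Gbim.obj x := eqToHom (if_pos h).symm

lemma ofZ_toZ {x : (Fin 2)ᵒᵖ × Fin 2} (h : x.1.unop < x.2) (m : ℤ) :
    toZ h (ofZ h m) = m := by
  rw [← CategoryTheory.comp_apply, ofZ, toZ]
  erw [eqToHom_trans, eqToHom_refl]
  rfl

lemma toZ_ofZ {x : (Fin 2)ᵒᵖ × Fin 2} (h : x.1.unop < x.2) (a : ↥(Gbim.obj x)) :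
    ofZ h (toZ h a) = a := by
  rw [← CategoryTheory.comp_apply, toZ, ofZ]
  erw [eqToHom_trans, eqToHom_refl]
  rfl

lemma toZ_inj {x : (Fin 2)ᵒᵖ × Fin 2} (h : x.1.unop < x.2) {a b : ↥(Gbim.obj x)}
    (hab : toZ h a = toZ h b) : a = b := by
  rw [← toZ_ofZ h a, ← toZ_ofZ h b, hab]

lemma map_toZ {x y : (Fin 2)ᵒᵖ × Fin 2} (p : x ⟶ y) (hx : x.1.unop < x.2)
    (hy : y.1.unop < y.2) (ξ : ↥(Gbim.obj x)) :
    toZ hy (Gbim.map p ξ) = toZ hx ξ := by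
  have : Gbim.map p ≫ toZ hy = toZ hx := by
    show (if hx' : x.1.unop < x.2 then eqToHom _ else 0) ≫ _ = _
    rw [dif_pos hx, toZ, toZ]
    erw [eqToHom_trans]
  rw [← this, CategoryTheory.comp_apply]

lemma subsingleton_comp {x : (Fin 2)ᵒᵖ × Fin 2} (h : ¬ x.1.unop < x.2) :
    Subsingleton ↥(Gbim.obj x) := by
  have e : Gbim.obj x = AddCommGrpCat.of PUnit := if_neg h
  rw [e]
  infer_instance

/-- the jump simplex -/
def σo (n k : ℕ) : Fin (n+1) → Fin 2 := fun j => if (j:ℕ) < k then 0 else 1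

lemma σo_mono (n k : ℕ) : Monotone (σo n k) := by
  intro a b hab
  dsimp [σo]
  split_ifs <;> omega

def σc (n k : ℕ) : ComposableArrows (Fin 2) n := (σo_mono n k).functor

@[simp] lemma σc_obj (n k : ℕ) (j : Fin (n+1)) :
    (σc n k).obj j = if (j:ℕ) < k then 0 else 1 := rfl

lemma σc_lt {n k : ℕ} (h1 : 1 ≤ k) (h2 : k ≤ n) :
    (σc n k).obj 0 < (σc n k).obj (Fin.last n) := by
  rw [σc_obj, σc_obj, if_pos (show ((0 : Fin (n+1)) : ℕ) < k by rw [Fin.val_zero]; omega),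
    if_neg (show ¬ ((Fin.last n : Fin (n+1)) : ℕ) < k by rw [Fin.val_last]; omega)]
  decide

lemma cext {n : ℕ} {F G : ComposableArrows (Fin 2) n} (h : ∀ j, F.obj j = G.obj j) :
    F = G :=
  CategoryTheory.Functor.ext h (fun _ _ _ => Subsingleton.elim _ _)

/-- jump position -/
noncomputable def jmp {n : ℕ} (τ : ComposableArrows (Fin 2) n) : ℕ :=
  if hne : (Finset.univ.filter (fun j => τ.obj j = 1)).Nonempty
  then (((Finset.univ.filter (fun j => τ.obj j = 1)).min' hne : Fin (n+1)) : ℕ) else 0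

lemma jmp_σc {n k : ℕ} (h1 : 1 ≤ k) (h2 : k ≤ n) : jmp (σc n k) = k := by
  have hmem : (⟨k, by omega⟩ : Fin (n+1)) ∈
      Finset.univ.filter (fun j => (σc n k).obj j = 1) := by
    simp [σc_obj]
  have hne : (Finset.univ.filter (fun j => (σc n k).obj j = 1)).Nonempty := ⟨_, hmem⟩
  rw [jmp, dif_pos hne]
  have h1' := Finset.min'_le _ _ hmem
  have h2' : (⟨k, by omega⟩ : Fin (n+1)) ≤ Finset.min' _ hne := by
    apply Finset.le_min'
    intro y hy
    have h2y := (Finset.mem_filter.mp hy).2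
    simp only [σc_obj] at h2y
    have hky : k ≤ (y : ℕ) := by
      by_contra hc
      rw [if_pos (by omega)] at h2y
      exact absurd h2y (by omega)
    simpa [Fin.le_def] using hky
  have : Finset.min' _ hne = (⟨k, by omega⟩ : Fin (n+1)) := le_antisymm h1' h2'
  rw [this]

lemma classify {n : ℕ} (τ : ComposableArrows (Fin 2) n) (h0 : τ.obj 0 = 0)
    (h1 : τ.obj (Fin.last n) = 1) :
    1 ≤ jmp τ ∧ jmp τ ≤ n ∧ τ = σc n (jmp τ) := by
  have mono : Monotone τ.obj := fun a b hab => leOfHom (τ.map (homOfLE hab))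
  have hne : (Finset.univ.filter (fun j => τ.obj j = 1)).Nonempty :=
    ⟨Fin.last n, by simp [h1]⟩
  set m := (Finset.univ.filter (fun j => τ.obj j = 1)).min' hne with hm
  have hjmp : jmp τ = (m : ℕ) := by rw [jmp, dif_pos hne]
  have hm1 : τ.obj m = 1 := by
    have := Finset.min'_mem _ hne
    rw [← hm] at this
    exact (Finset.mem_filter.mp this).2
  have key : ∀ j, τ.obj j = if (j : ℕ) < (m : ℕ) then 0 else 1 := by
    intro j
    by_cases hj : (j : ℕ) < (m : ℕ)
    · rw [if_pos hj]
      have hne1 : τ.obj j ≠ 1 := by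
        intro hj1
        have : m ≤ j := Finset.min'_le _ _ (by simp [hj1])
        rw [Fin.le_def] at this
        omega
      omega
    · rw [if_neg hj]
      have : τ.obj m ≤ τ.obj j := mono (by rw [Fin.le_def]; omega)
      omega
  have hm0 : 1 ≤ (m : ℕ) := by
    by_contra hc
    have := key 0
    rw [h0, if_neg (by simp only [Fin.val_zero]; omega)] at this
    exact absurd this (by omega)
  have hmn : (m : ℕ) ≤ n := by
    have := key (Fin.last n)
    rw [h1, Fin.val_last] at this
    by_contra hc
    rw [if_pos (by omega)] at this
    exact absurd this (by omega)
  rw [hjmp]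
  exact ⟨hm0, hmn, cext (fun j => by rw [key j, σc_obj])⟩


/-- the value of a cochain at the jump simplex `σc n k` -/
noncomputable def val {n : ℕ} (φ : ↥(barObj Gbim (SimplexCategory.mk n))) (k : ℕ) : ℤ :=
  if h : 1 ≤ k ∧ k ≤ n then toZ (σc_lt h.1 h.2) (φ (σc n k)) else 0

lemma val_zero {n : ℕ} (k : ℕ) : val (0 : ↥(barObj Gbim (SimplexCategory.mk n))) k = 0 := by
  rw [val]
  split
  · exact map_zero _
  · rfl

lemma val_out {n : ℕ} (φ : ↥(barObj Gbim (SimplexCategory.mk n))) (k : ℕ)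
    (h : ¬ (1 ≤ k ∧ k ≤ n)) : val φ k = 0 := by rw [val, dif_neg h]

/-- build a cochain from jump values -/
noncomputable def mkc {n : ℕ} (v : ℕ → ℤ) : ↥(barObj Gbim (SimplexCategory.mk n)) :=
  fun τ => if h : τ.obj 0 < τ.obj (Fin.last n) then ofZ h (v (jmp τ)) else 0

lemma val_mkc {n : ℕ} (v : ℕ → ℤ) {k : ℕ} (h1 : 1 ≤ k) (h2 : k ≤ n) :
    val (mkc (n := n) v) k = v k := by
  rw [val, dif_pos ⟨h1, h2⟩]
  unfold mkc
  split
  · rw [jmp_σc h1 h2]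
    exact ofZ_toZ _ _
  · exact absurd (σc_lt h1 h2) ‹_›

lemma val_ext {n : ℕ} (φ ψ : ↥(barObj Gbim (SimplexCategory.mk n)))
    (h : ∀ k, 1 ≤ k → k ≤ n → val φ k = val ψ k) : φ = ψ := by
  funext τ
  by_cases hτ : τ.obj 0 < τ.obj (Fin.last n)
  · obtain ⟨h0, h1⟩ := lt2 hτ
    obtain ⟨hk1, hk2, hτe⟩ := classify τ h0 h1
    have hv := h (jmp τ) hk1 hk2
    rw [val, dif_pos ⟨hk1, hk2⟩, val, dif_pos ⟨hk1, hk2⟩] at hv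
    have := toZ_inj _ hv
    rw [hτe]
    exact this
  · have : Subsingleton
        ↥(Gbim.obj (op (τ.obj 0), τ.obj (Fin.last (SimplexCategory.mk n).len))) :=
      subsingleton_comp hτ
    exact Subsingleton.elim _ _


open AlgebraicTopology

lemma val_add {n : ℕ} (φ ψ : ↥(barObj Gbim (SimplexCategory.mk n))) (k : ℕ) :
    val (φ + ψ) k = val φ k + val ψ k := by
  rw [val, val, val]
  split
  · exact map_add _ _ _
  · simp

lemma K_d (n : ℕ) : (cochainComplex Gbim).d n (n+1)
    = AlternatingCofaceMapComplex.objD (barCosimplicial Gbim) n :=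
  CochainComplex.of_d (fun n => (barCosimplicial Gbim).obj (SimplexCategory.mk n))
    (AlternatingCofaceMapComplex.objD (barCosimplicial Gbim)) n

lemma bar_map_apply {Δ₁ Δ₂ : SimplexCategory} (g : Δ₁ ⟶ Δ₂)
    (φ : ↥(barObj Gbim Δ₁)) (τ : (nerve (Fin 2)).obj (op Δ₂)) :
    (barCosimplicial Gbim).map g φ τ =
      Gbim.map ((τ.map (homOfLE (Fin.zero_le _))).op, τ.map (homOfLE (Fin.le_last _)))
        (φ ((nerve (Fin 2)).map g.op τ)) := rfl


lemma val_succAbove {n : ℕ} (i : Fin (n+2)) (j : Fin (n+1)) :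
    ((Fin.succAbove i j : Fin (n+2)) : ℕ) = if (j:ℕ) < (i:ℕ) then (j:ℕ) else (j:ℕ)+1 := by
  rcases lt_or_ge (Fin.castSucc j) i with h | h
  · rw [Fin.succAbove_of_castSucc_lt _ _ h, if_pos (by simpa [Fin.lt_def] using h),
      Fin.coe_castSucc]
  · rw [Fin.succAbove_of_le_castSucc _ _ h, if_neg (by simpa [Fin.le_def, not_lt] using h),
      Fin.val_succ]

lemma face_obj {n k : ℕ} (i : Fin (n+2)) (j : Fin (n+1)) :
    ((nerve (Fin 2)).map (SimplexCategory.δ i).op (σc (n+1) k)).obj j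
      = if (j:ℕ) < (if (i:ℕ) < k then k-1 else k) then 0 else 1 := by
  show σo (n+1) k (Fin.succAbove i j) = _
  rw [σo, val_succAbove]
  split_ifs <;> omega

lemma toZval_congr {n : ℕ} (φ : ↥(barObj Gbim (SimplexCategory.mk n)))
    {τ₁ τ₂ : (nerve (Fin 2)).obj (op (SimplexCategory.mk n))} (h : τ₁ = τ₂)
    (h1 : τ₁.obj 0 < τ₁.obj (Fin.last n)) (h2 : τ₂.obj 0 < τ₂.obj (Fin.last n)) :
    toZ h1 (φ τ₁) = toZ h2 (φ τ₂) := by subst h; rfl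

lemma term_eval {n k : ℕ} (hk1 : 1 ≤ k) (hk2 : k ≤ n+1)
    (φ : ↥(barObj Gbim (SimplexCategory.mk n))) (i : Fin (n+2)) :
    toZ (σc_lt (n := n+1) hk1 hk2)
        ((barCosimplicial Gbim).map (SimplexCategory.δ i) φ (σc (n+1) k))
      = (if (i:ℕ) < k then val φ (k-1) else val φ k) := by
  erw [bar_map_apply]
  rw [← apply_ite (val φ)]
  set k' := if (i:ℕ) < k then k - 1 else k with hk'
  have hFobj : ∀ j : Fin (n+1),
      ((nerve (Fin 2)).map (SimplexCategory.δ i).op (σc (n+1) k)).obj j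
        = if (j:ℕ) < k' then 0 else 1 := fun j => by rw [face_obj, hk']
  have hup : k' ≤ n + 1 := by rw [hk']; split <;> omega
  by_cases hk'' : 1 ≤ k' ∧ k' ≤ n
  · have hlt : ((nerve (Fin 2)).map (SimplexCategory.δ i).op (σc (n+1) k)).obj 0 <
        ((nerve (Fin 2)).map (SimplexCategory.δ i).op (σc (n+1) k)).obj (Fin.last n) := by
      rw [hFobj, hFobj]
      rw [if_pos (show ((0 : Fin (n+1)) : ℕ) < k' by rw [Fin.val_zero]; omega),
        if_neg (show ¬ ((Fin.last n : Fin (n+1)) : ℕ) < k' by rw [Fin.val_last]; omega)]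
      decide
    rw [map_toZ _ hlt _]
    rw [val, dif_pos hk'']
    have hFe : (nerve (Fin 2)).map (SimplexCategory.δ i).op (σc (n+1) k) = σc n k' :=
      cext (fun j => by rw [hFobj, σc_obj])
    exact toZval_congr φ hFe hlt _
  · have hnlt : ¬ (((nerve (Fin 2)).map (SimplexCategory.δ i).op (σc (n+1) k)).obj 0 <
        ((nerve (Fin 2)).map (SimplexCategory.δ i).op (σc (n+1) k)).obj (Fin.last n)) := by
      rw [hFobj, hFobj]
      simp only [Fin.val_zero, Fin.val_last]
      have : k' = 0 ∨ k' = n + 1 := by omega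
      rcases this with h | h <;> rw [h] <;> simp <;> omega
    have hss : Subsingleton
        ↥(Gbim.obj (op (((nerve (Fin 2)).map (SimplexCategory.δ i).op (σc (n+1) k)).obj 0),
          ((nerve (Fin 2)).map (SimplexCategory.δ i).op (σc (n+1) k)).obj
            (Fin.last (SimplexCategory.mk n).len))) :=
      subsingleton_comp hnlt
    rw [Subsingleton.elim (φ ((nerve (Fin 2)).map (SimplexCategory.δ i).op (σc (n+1) k))) 0,
      map_zero, map_zero]
    rw [val_out]
    omega

lemma val_d {n : ℕ} (φ : ↥(barObj Gbim (SimplexCategory.mk n))) (k : ℕ)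
    (hk1 : 1 ≤ k) (hk2 : k ≤ n+1) :
    val ((cochainComplex Gbim).d n (n+1) φ) k
      = ∑ i : Fin (n+2), (-1:ℤ)^(i:ℕ) * (if (i:ℕ) < k then val φ (k-1) else val φ k) := by
  rw [K_d]
  conv_lhs => unfold val
  rw [dif_pos ⟨hk1, hk2⟩]
  have happ : AlternatingCofaceMapComplex.objD (barCosimplicial Gbim) n φ (σc (n+1) k)
      = ∑ i : Fin (n+2), (-1:ℤ)^(i:ℕ) •
          ((barCosimplicial Gbim).map (SimplexCategory.δ i) φ (σc (n+1) k)) := by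
    show (∑ i : Fin (n + 2), (-1 : ℤ) ^ (i:ℕ) • (barCosimplicial Gbim).δ i).hom φ (σc (n+1) k) = _
    erw [show (∑ i : Fin (n + 2), (-1 : ℤ) ^ (i:ℕ) • (barCosimplicial Gbim).δ i).hom
        = ∑ i : Fin (n + 2), ((-1 : ℤ) ^ (i:ℕ) • (barCosimplicial Gbim).δ i).hom from
      map_sum AddCommGrpCat.homAddEquiv _ _, AddMonoidHom.finset_sum_apply]
    erw [Finset.sum_apply]
    rfl
  refine (congrArg (toZ (σc_lt hk1 hk2)) happ).trans ?_
  rw [map_sum]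
  refine Finset.sum_congr rfl (fun i _ => ?_)
  rw [map_zsmul, smul_eq_mul, term_eval hk1 hk2 φ i]

def Sgn (m : ℕ) : ℤ := if Even m then 0 else 1

lemma sum_eval (n k : ℕ) (hk : k ≤ n+2) (a b : ℤ) :
    (∑ i : Fin (n+2), (-1:ℤ)^(i:ℕ) * (if (i:ℕ) < k then a else b))
      = Sgn k * a + (Sgn (n+2) - Sgn k) * b := by
  rw [Fin.sum_univ_eq_sum_range (fun i => (-1:ℤ)^i * (if i < k then a else b)) (n+2)]
  rw [← Finset.sum_range_add_sum_Ico _ hk]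
  have h1 : ∑ i ∈ Finset.range k, (-1:ℤ)^i * (if i < k then a else b)
      = Sgn k * a := by
    rw [Finset.sum_congr rfl (fun i hi => by rw [if_pos (Finset.mem_range.mp hi)]),
      ← Finset.sum_mul, neg_one_geom_sum, Sgn]
  have h2 : ∑ i ∈ Finset.Ico k (n+2), (-1:ℤ)^i * (if i < k then a else b)
      = (Sgn (n+2) - Sgn k) * b := by
    rw [Finset.sum_congr rfl
        (fun i hi => by rw [if_neg (by have := (Finset.mem_Ico.mp hi).1; omega)]),
      ← Finset.sum_mul, Finset.sum_Ico_eq_sub _ hk, neg_one_geom_sum, neg_one_geom_sum,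
      Sgn, Sgn]
  rw [h1, h2]

lemma val_d' {n : ℕ} (φ : ↥(barObj Gbim (SimplexCategory.mk n))) (k : ℕ)
    (hk1 : 1 ≤ k) (hk2 : k ≤ n+1) :
    val ((cochainComplex Gbim).d n (n+1) φ) k
      = Sgn k * val φ (k-1) + (Sgn (n+2) - Sgn k) * val φ k := by
  rw [val_d φ k hk1 hk2]
  exact sum_eval n k (by omega) _ _

lemma val_d2 {n m : ℕ} (hm : m = n + 1) (φ : ↥(barObj Gbim (SimplexCategory.mk n)))
    (k : ℕ) (hk1 : 1 ≤ k) (hk2 : k ≤ m) :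
    val ((cochainComplex Gbim).d n m φ) k
      = Sgn k * val φ (k-1) + (Sgn (m+1) - Sgn k) * val φ k := by
  subst hm; exact val_d' φ k hk1 hk2

lemma Sgn_eq (m : ℕ) : Sgn m = if m % 2 = 0 then 0 else 1 := by
  simp only [Sgn, Nat.even_iff]

lemma isZero_barObj {A : Type} [Category.{0} A] (G : Aᵒᵖ × A ⥤ AddCommGrpCat.{0})
    (Δ : SimplexCategory)
    (h : ∀ τ : (nerve A).obj (op Δ),
      Subsingleton ↥(G.obj (op (τ.obj 0), τ.obj (Fin.last Δ.len)))) :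
    IsZero (barObj G Δ) := by
  haveI : Subsingleton ↥(barObj G Δ) :=
    ⟨fun f g => funext fun τ => @Subsingleton.elim _ (h τ) _ _⟩
  exact AddCommGrpCat.isZero_of_subsingleton _

lemma isZero_X0 : IsZero ((cochainComplex Gbim).X 0) :=
  isZero_barObj Gbim (SimplexCategory.mk 0) (fun τ => subsingleton_comp (lt_irrefl _))

lemma h0 : IsZero (cohomology Gbim 0) := by
  show IsZero ((cochainComplex Gbim).homology 0)
  rw [← HomologicalComplex.exactAt_iff_isZero_homology]
  exact ShortComplex.exact_of_isZero_X₂ _ isZero_X0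

lemma d01 : (cochainComplex Gbim).d 0 1 = 0 := isZero_X0.eq_of_src _ _

lemma d12 : (cochainComplex Gbim).d 1 2 = 0 := by
  ext φ
  show (cochainComplex Gbim).d 1 2 φ = (0 : ↥(barObj Gbim (SimplexCategory.mk 2)))
  refine val_ext _ _ (fun k h1 h2 => ?_)
  rw [val_zero, val_d2 (show (2:ℕ) = 1 + 1 from rfl) φ k h1 (by omega)]
  rw [Sgn_eq, Sgn_eq]
  have : k = 1 ∨ k = 2 := by omega
  rcases this with rfl | rfl
  · rw [val_out φ 0 (by omega)]
    norm_num
  · rw [val_out φ 2 (by omega)]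
    norm_num

noncomputable def addequiv1 :
    ↥((cochainComplex Gbim).X 1) ≃+ ↥(AddCommGrpCat.of ℤ) where
  toFun φ := val (n := 1) φ 1
  invFun m := mkc (n := 1) (fun _ => m)
  left_inv φ := val_ext _ _ (fun k h1 h2 => by
    have : k = 1 := by omega
    subst this
    rw [val_mkc _ (by omega) (by omega)])
  right_inv m := val_mkc _ (by omega) (by omega)
  map_add' φ ψ := val_add φ ψ 1

noncomputable def h1iso : cohomology Gbim 1 ≅ AddCommGrpCat.of ℤ :=
  ((cochainComplex Gbim).homologyIsoSc' 0 1 2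
      ((ComplexShape.up ℕ).prev_eq' (by simp)) ((ComplexShape.up ℕ).next_eq' (by simp))).trans
    (((ShortComplex.LeftHomologyData.ofZeros _ d01 d12).homologyIso).trans
      addequiv1.toAddCommGrpIso)

lemma hn (n : ℕ) (hn2 : 2 ≤ n) : IsZero (cohomology Gbim n) := by
  obtain ⟨m, hm1, rfl⟩ : ∃ m, 1 ≤ m ∧ n = m + 1 := ⟨n - 1, by omega, by omega⟩
  show IsZero ((cochainComplex Gbim).homology (m+1))
  rw [← HomologicalComplex.exactAt_iff_isZero_homology]
  rw [HomologicalComplex.exactAt_iff' _ m (m+1) (m+2)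
    ((ComplexShape.up ℕ).prev_eq' (by simp)) ((ComplexShape.up ℕ).next_eq' (by simp))]
  rw [ShortComplex.ab_exact_iff]
  intro φ hφ0
  have hφ : (cochainComplex Gbim).d (m+1) (m+2) φ = 0 := hφ0
  have hv : ∀ k, 1 ≤ k → k ≤ m+2 →
      Sgn k * val φ (k-1) + (Sgn (m+3) - Sgn k) * val φ k = 0 := by
    intro k h1 h2
    rw [← val_d2 (show m+2 = (m+1)+1 from rfl) φ k h1 h2, hφ]
    erw [val_zero]
  rcases Nat.even_or_odd (m+1) with he | ho
  · -- n = m+1 even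
    have hpm : (m+1) % 2 = 0 := Nat.even_iff.mp he
    refine ⟨mkc (n := m) (fun j => val φ j), ?_⟩
    show (cochainComplex Gbim).d m (m+1) (mkc (n := m) (fun j => val φ j)) = φ
    refine val_ext _ _ (fun k h1 h2 => ?_)
    rw [val_d2 rfl _ k h1 (by omega)]
    rw [Sgn_eq, Sgn_eq, if_neg (show ¬ (m+1+1)%2 = 0 by omega)]
    by_cases hek : k % 2 = 0
    · rw [if_pos hek]
      by_cases hkm : k ≤ m
      · rw [val_mkc _ h1 hkm]
        ring
      · have hk : k = m+1 := by omega
        subst hk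
        rw [val_out _ (m+1) (by omega)]
        have e2 := hv (m+2) (by omega) (by omega)
        rw [Sgn_eq, Sgn_eq, if_neg (by omega), if_pos (by omega),
          val_out φ (m+2) (by omega), show m+2-1 = m+1 from by omega] at e2
        linarith
    · rw [if_neg hek]
      by_cases hk1' : k = 1
      · subst hk1'
        rw [val_out _ 0 (by omega)]
        have e2 := hv 1 (by omega) (by omega)
        rw [Sgn_eq, Sgn_eq, if_neg (by omega), if_pos (by omega),
          val_out φ 0 (by omega)] at e2
        linarith
      · -- 3 ≤ k ≤ m, k odd
        have hkm : k ≤ m := by omega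
        rw [val_mkc _ (show 1 ≤ k - 1 by omega) (show k - 1 ≤ m by omega)]
        have e2 := hv k h1 (by omega)
        rw [Sgn_eq, Sgn_eq, if_neg hek, if_pos (by omega)] at e2
        linarith
  · -- n = m+1 odd
    have hpm : (m+1) % 2 = 1 := Nat.odd_iff.mp ho
    have hm2 : 2 ≤ m := by omega
    set v : ℕ → ℤ := fun j => if j = m then val φ (m+1)
      else -(∑ i ∈ Finset.range (j+1), if i % 2 = 1 then val φ i else 0) with hvdef
    refine ⟨mkc (n := m) v, ?_⟩
    show (cochainComplex Gbim).d m (m+1) (mkc (n := m) v) = φ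
    have hveq : ∀ j, ¬ j = m → 1 ≤ j → j ≤ m →
        val (mkc (n := m) v) j = -(∑ i ∈ Finset.range (j+1), if i % 2 = 1 then val φ i else 0) := by
      intro j hj h1 h2
      rw [val_mkc _ h1 h2, hvdef]
      simp only [if_neg hj]
    have hvm : val (mkc (n := m) v) m = val φ (m+1) := by
      rw [val_mkc _ (by omega) (by omega), hvdef]
      simp
    have hφeven : ∀ k, k ≤ m+2 → k % 2 = 0 → val φ k = 0 := by
      intro k h2 hk
      by_cases h1 : 1 ≤ k
      · have e2 := hv k h1 h2
        rw [Sgn_eq, Sgn_eq, if_pos hk, if_neg (by omega)] at e2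
        linarith
      · rw [val_out φ k (by omega)]
    refine val_ext _ _ (fun k h1 h2 => ?_)
    rw [val_d2 rfl _ k h1 (by omega)]
    rw [Sgn_eq, Sgn_eq, if_pos (show (m+1+1)%2 = 0 by omega)]
    by_cases hek : k % 2 = 0
    · rw [if_pos hek, hφeven k (by omega) hek]
      ring
    · rw [if_neg hek]
      by_cases hkm : k = m+1
      · subst hkm
        rw [val_out (mkc (n := m) v) (m+1) (by omega), show m+1-1 = m from by omega, hvm]
        ring
      · have hkm' : k ≤ m - 1 := by omega
        rw [hveq k (by omega) h1 (by omega)]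
        by_cases hk1' : k = 1
        · subst hk1'
          rw [val_out (mkc (n := m) v) 0 (by omega)]
          rw [Finset.sum_range_succ, Finset.sum_range_one]
          norm_num
        · rw [hveq (k-1) (by omega) (by omega) (by omega)]
          have hsr : (∑ i ∈ Finset.range (k+1), if i % 2 = 1 then val φ i else 0)
              = (∑ i ∈ Finset.range k, if i % 2 = 1 then val φ i else 0)
                + (if k % 2 = 1 then val φ k else 0) := Finset.sum_range_succ _ _
          rw [show k - 1 + 1 = k by omega] at *
          rw [hsr, if_pos (by omega)]
          ring

lemma target_zero : IsZero (cohomology (f01.op.prod f01 ⋙ Gbim) 1) := by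
  show IsZero ((cochainComplex (f01.op.prod f01 ⋙ Gbim)).homology 1)
  rw [← HomologicalComplex.exactAt_iff_isZero_homology]
  refine ShortComplex.exact_of_isZero_X₂ _ ?_
  exact isZero_barObj (f01.op.prod f01 ⋙ Gbim) (SimplexCategory.mk 1)
    (fun τ => subsingleton_comp (lt_irrefl _))

def g10 : Fin 2 ⥤ Fin 1 := (monotone_const (c := (0 : Fin 1))).functor

noncomputable def adj : f01 ⊣ g10 :=
  Adjunction.mkOfHomEquiv
    { homEquiv := fun x y =>
        { toFun := fun _ => homOfLE (Subsingleton.elim _ _).le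
          invFun := fun _ => homOfLE (Fin.zero_le _)
          left_inv := fun _ => Subsingleton.elim _ _
          right_inv := fun _ => Subsingleton.elim _ _ }
      homEquiv_naturality_left_symm := fun _ _ => Subsingleton.elim _ _
      homEquiv_naturality_right := fun _ _ => Subsingleton.elim _ _ }

lemma f01_isLeftAdjoint : f01.IsLeftAdjoint := ⟨g10, ⟨adj⟩⟩

lemma not_iso : ¬ IsIso (cohomologyMap f01 Gbim 1) := by
  intro hiso
  have e : cohomology Gbim 1 ≅ cohomology (f01.op.prod f01 ⋙ Gbim) 1 :=
    asIso (cohomologyMap f01 Gbim 1)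
  have hz : IsZero (cohomology Gbim 1) := target_zero.of_iso e
  have hzZ : IsZero (AddCommGrpCat.of ℤ) := hz.of_iso h1iso.symm
  have h := hzZ.eq_of_src (𝟙 (AddCommGrpCat.of ℤ)) 0
  have h01 : (1 : ℤ) = 0 := by
    calc (1:ℤ) = (𝟙 (AddCommGrpCat.of ℤ)) (1:ℤ) := rfl
    _ = (0 : AddCommGrpCat.of ℤ ⟶ AddCommGrpCat.of ℤ) (1:ℤ) := by rw [h]
    _ = 0 := rfl
  exact absurd h01 one_ne_zero

end Aux15
end CatCohomology


/-- Let `[1]` be the category `0 ⟶ 1` (here `Fin 2`) and `G` the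
bimodule on `[1]` with `G (0, 1) = ℤ` and all other values `0`.  Then
`H⁰_HM([1], G) = 0`, `H¹_HM([1], G) ≅ ℤ`, and `Hⁿ_HM([1], G) = 0` for `n ≥ 2`.
Consequently, for the functor `f : [0] ⥤ [1]` with `f 0 = 0` (which admits a right
adjoint), the canonical homomorphism `H¹_HM([1], G) ⟶ H¹_HM([0], G ∘ (fᵒᵖ × f))` is
not an isomorphism. -/
theorem statement15 :
    IsZero (cohomology Gbim 0) ∧
    Nonempty (cohomology Gbim 1 ≅ AddCommGrpCat.of ℤ) ∧
    (∀ n : ℕ, 2 ≤ n → IsZero (cohomology Gbim n)) ∧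
    f01.IsLeftAdjoint ∧
    ¬ IsIso (cohomologyMap f01 Gbim 1) :=
  ⟨CatCohomology.Aux15.h0, ⟨CatCohomology.Aux15.h1iso⟩, CatCohomology.Aux15.hn,
    CatCohomology.Aux15.f01_isLeftAdjoint, CatCohomology.Aux15.not_iso⟩
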